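/- Let q, ρ, ψ be positive vectors with ρ_n = ψ_n q_n for all n. Suppose (i) for each n, ρ_n solves CLIENT_n (maximize U_n(ρ/ψ_n) − ρ over ρ ≥ 0), and (ii) q solves ACCESS-POINT (maximize Σ ρ_i log q_i over the feasible region). Then q solves SYSTEM (maximize Σ U_i(q_i) over the feasible region). -/

import Mathlib

open Finset


lemma log_lb {u : ℝ} (h : -(1/2 : ℝ) ≤ u) : u - 2*u^2 ≤ Real.log (1+u) := by
  have h1 : (0:ℝ) < 1 + u := by linarith
  have h2 : Real.log (1+u)⁻¹ ≤ (1+u)⁻¹ - 1 :=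
    Real.log_le_sub_one_of_pos (by positivity)
  rw [Real.log_inv] at h2
  have h3 : 1 - (1+u)⁻¹ ≤ Real.log (1+u) := by linarith
  rw [inv_eq_one_div] at h3
  have h5 : 1/(1+u) ≤ 1 - u + 2*u^2 := by
    rw [div_le_iff₀ h1]
    nlinarith [mul_nonneg (sq_nonneg u) (by linarith : (0:ℝ) ≤ 1 + 2*u)]
  linarith


/-- Converse direction of Theorem 2 (Kelly-style decomposition).  Let `q, ρ, ψ` be
positive vectors with `ρ n = ψ n * q n`.  If (i) for every `n`, `ρ n` solves
CLIENT_n, i.e. it maximizes `U_n(r/ψ_n) - r` over `r ≥ 0`, and (ii) `q` solves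
ACCESS-POINT, i.e. `q` is feasible and maximizes `∑ ρ_i log q_i` over the feasible
region, then `q` solves SYSTEM: it maximizes `∑ U_i(q_i)` over the feasible region. -/
theorem stmt_5 (N : ℕ) (τ : ℝ) (p : Fin N → ℝ) (I : Finset (Fin N) → ℝ)
    (hp : ∀ n, 0 < p n ∧ p n ≤ 1)
    (U : Fin N → ℝ → ℝ)
    (hUmono : ∀ n, StrictMonoOn (U n) (Set.Ioc 0 1))
    (hUconc : ∀ n, StrictConcaveOn ℝ (Set.Ioc 0 1) (U n))
    -- Slater: a strictly interior feasible point exists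
    (hSlater : ∃ x : Fin N → ℝ, (∀ n, 0 < x n) ∧
      ∀ S : Finset (Fin N), ∑ i ∈ S, x i / p i < τ - I S)
    (q ρ ψ : Fin N → ℝ)
    (hqpos : ∀ n, 0 < q n) (hρpos : ∀ n, 0 < ρ n) (hψpos : ∀ n, 0 < ψ n)
    (hρψ : ∀ n, ρ n = ψ n * q n)
    -- (i) ρ n solves CLIENT_n
    (hclient : ∀ n, ∀ r : ℝ, 0 ≤ r → U n (r / ψ n) - r ≤ U n (ρ n / ψ n) - ρ n)
    -- (ii) q solves ACCESS-POINT
    (hqfeas : ∀ S : Finset (Fin N), ∑ i ∈ S, q i / p i ≤ τ - I S)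
    (hap : ∀ q' : Fin N → ℝ, (∀ n, 0 < q' n) →
      (∀ S : Finset (Fin N), ∑ i ∈ S, q' i / p i ≤ τ - I S) →
      ∑ i, ρ i * Real.log (q' i) ≤ ∑ i, ρ i * Real.log (q i)) :
    ∀ q' : Fin N → ℝ, (∀ n, 0 ≤ q' n) →
      (∀ S : Finset (Fin N), ∑ i ∈ S, q' i / p i ≤ τ - I S) →
      ∑ i, U i (q' i) ≤ ∑ i, U i (q i) := by
  intro q' hq'nn hq'feas
  -- direction d
  set d : Fin N → ℝ := fun i => (q' i - q i) / q i with hd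
  have hdge : ∀ i, -1 ≤ d i := fun i => by
    rw [hd]
    rw [le_div_iff₀ (hqpos i)]
    nlinarith [hq'nn i, hqpos i]
  set A : ℝ := ∑ i, ρ i * d i with hA
  set B : ℝ := ∑ i, ρ i * (d i)^2 with hB
  have hBnn : 0 ≤ B := Finset.sum_nonneg fun i _ =>
    mul_nonneg (hρpos i).le (sq_nonneg _)
  -- Step 1: A ≤ 0 from access-point optimality
  have hAle : A ≤ 0 := by
    by_contra hcon
    push_neg at hcon
    set t : ℝ := min (1/2) (A / (4*B + 1)) with ht
    have htpos : 0 < t := lt_min (by norm_num) (by positivity)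
    have hthalf : t ≤ 1/2 := min_le_left _ _
    have ht2 : t ≤ A / (4*B + 1) := min_le_right _ _
    -- perturbed point
    set qt : Fin N → ℝ := fun i => q i + t * (q' i - q i) with hqt
    have hqtpos : ∀ n, 0 < qt n := fun n => by
      have : qt n = (1 - t) * q n + t * q' n := by ring
      rw [this]
      have : 0 < (1 - t) * q n := mul_pos (by linarith) (hqpos n)
      nlinarith [mul_nonneg htpos.le (hq'nn n)]
    have hqtfeas : ∀ S : Finset (Fin N), ∑ i ∈ S, qt i / p i ≤ τ - I S := by
      intro S
      have : ∑ i ∈ S, qt i / p i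
          = (1 - t) * ∑ i ∈ S, q i / p i + t * ∑ i ∈ S, q' i / p i := by
        rw [Finset.mul_sum, Finset.mul_sum, ← Finset.sum_add_distrib]
        refine Finset.sum_congr rfl fun i _ => ?_
        field_simp
        ring
      rw [this]
      have h1 := hqfeas S
      have h2 := hq'feas S
      nlinarith
    have hkey := hap qt hqtpos hqtfeas
    -- pointwise lower bound on log qt
    have hpt : ∀ i : Fin N, ρ i * Real.log (q i) + t * (ρ i * d i)
        - 2 * t^2 * (ρ i * (d i)^2) ≤ ρ i * Real.log (qt i) := by
      intro i
      have hqi := hqpos i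
      have hfac : qt i = q i * (1 + t * d i) := by
        rw [hqt, hd]; field_simp
      have htd : -(1/2 : ℝ) ≤ t * d i := by
        have h' : t * (-1) ≤ t * d i := mul_le_mul_of_nonneg_left (hdge i) htpos.le
        linarith
      have hlog := log_lb htd
      have hpos : (0:ℝ) < 1 + t * d i := by linarith
      rw [hfac, Real.log_mul (ne_of_gt hqi) (ne_of_gt hpos)]
      have := mul_le_mul_of_nonneg_left hlog (hρpos i).le
      nlinarith [this]
    have hsum : ∑ i, ρ i * Real.log (q i) + t * A - 2 * t^2 * B
        ≤ ∑ i, ρ i * Real.log (qt i) := by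
      have h0 := Finset.sum_le_sum (fun i (_ : i ∈ Finset.univ) => hpt i)
      rw [Finset.sum_sub_distrib, Finset.sum_add_distrib, ← Finset.mul_sum,
        ← Finset.mul_sum] at h0
      rw [hA, hB]
      exact h0
    have hta : t * A ≤ 2 * t^2 * B := by linarith
    have hA2tB : A ≤ 2 * t * B := by
      have := (mul_le_mul_iff_right₀ htpos).mp (by nlinarith : t * A ≤ t * (2 * t * B))
      linarith [this]
    -- contradiction
    have hmul : t * (4*B+1) ≤ A := by
      rw [← le_div_iff₀ (by positivity : (0:ℝ) < 4*B+1)]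
      exact ht2
    nlinarith [mul_nonneg htpos.le hBnn]
  -- Step 2: client optimality gives U i x ≤ U i (q i) + ψ i (x - q i) for x ≥ 0
  have hgrad : ∀ i, U i (q' i) ≤ U i (q i) + ρ i * d i := by
    intro i
    have h := hclient i (ψ i * q' i) (mul_nonneg (hψpos i).le (hq'nn i))
    have h1 : ψ i * q' i / ψ i = q' i := mul_div_cancel_left₀ _ (hψpos i).ne'
    have h2 : ρ i / ψ i = q i := by rw [hρψ i]; exact mul_div_cancel_left₀ _ (hψpos i).ne'
    rw [h1, h2] at h
    have hqi := (hqpos i).ne'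
    have h3 : ρ i * d i = ψ i * q' i - ψ i * q i := by
      rw [hd, hρψ i]
      field_simp
    rw [hρψ i] at h
    linarith [h3, h]
  calc ∑ i, U i (q' i) ≤ ∑ i, (U i (q i) + ρ i * d i) :=
        Finset.sum_le_sum fun i _ => hgrad i
    _ = ∑ i, U i (q i) + A := by rw [Finset.sum_add_distrib]
    _ ≤ ∑ i, U i (q i) := by linarith
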